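/- Strict Farkas lemma (reverse direction): if every λ ∈ ℝ^n with λ ≥ 0 componentwise, Σ_i λ_i = 1, and λᵀA = 0 satisfies λᵀb > 0, then there exists u ∈ ℝ^m with A u < b componentwise. -/

import Mathlib

theorem strict_farkas_reverse (n m : ℕ) (A : Matrix (Fin n) (Fin m) ℝ) (b : Fin n → ℝ)
    (hlam : ∀ lam : Fin n → ℝ, (∀ i, 0 ≤ lam i) → (∑ i, lam i) = 1 →
      (∀ j, (∑ i, lam i * A i j) = 0) → 0 < ∑ i, lam i * b i) :
    ∃ u : Fin m → ℝ, ∀ i, A.mulVec u i < b i := by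
  by_contra hcon
  push_neg at hcon
  set s : Set (Fin n → ℝ) := Set.univ.pi (fun _ => Set.Iio (0:ℝ)) with hs
  set t : Set (Fin n → ℝ) := Set.range (fun u => A.mulVec u - b) with ht
  have hsconv : Convex ℝ s := convex_pi (fun i _ => convex_Iio 0)
  have hsopen : IsOpen s := isOpen_set_pi Set.finite_univ (fun i _ => isOpen_Iio)
  have htconv : Convex ℝ t := by
    rintro x ⟨u1, rfl⟩ y ⟨u2, rfl⟩ a c ha hc' habc
    refine ⟨a • u1 + c • u2, ?_⟩
    simp only [Matrix.mulVec_add, Matrix.mulVec_smul]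
    funext i
    simp only [Pi.add_apply, Pi.sub_apply, Pi.smul_apply, smul_eq_mul]
    have hc1 : c = 1 - a := by linarith
    rw [hc1]; ring
  have hdisj : Disjoint s t := by
    rw [Set.disjoint_left]
    rintro x hx ⟨u, rfl⟩
    obtain ⟨i, hi⟩ := hcon u
    have h2 := hx i (Set.mem_univ i)
    simp only [Set.mem_Iio, Pi.sub_apply] at h2
    linarith
  obtain ⟨f, u0, hfs, hft⟩ := geometric_hahn_banach_open hsconv hsopen htconv hdisj
  set lam : Fin n → ℝ := fun i => f (Pi.single i (1:ℝ)) with hlamdef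
  have hfx : ∀ x : Fin n → ℝ, f x = ∑ i, x i * lam i := by
    intro x
    have hxsum : x = ∑ i, x i • (Pi.single i (1:ℝ) : Fin n → ℝ) := by
      funext j
      simp [Pi.single_apply, Finset.sum_apply, mul_ite]
    calc f x = f (∑ i, x i • (Pi.single i (1:ℝ) : Fin n → ℝ)) := by rw [← hxsum]
    _ = ∑ i, x i * lam i := by
        rw [map_sum]
        exact Finset.sum_congr rfl (fun i _ => by rw [map_smul]; rfl)
  -- the constant -1 point
  have hneg1 : (fun _ : Fin n => (-1:ℝ)) ∈ s := fun i _ => by norm_num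
  have hcval : f (fun _ => (-1:ℝ)) < u0 := hfs _ hneg1
  -- 0 ≤ u0
  have hu0 : 0 ≤ u0 := by
    by_contra h
    push_neg at h
    set c := f (fun _ : Fin n => (-1:ℝ)) with hc
    rcases le_or_gt 0 c with h1 | h1
    · linarith
    · have key : ∀ ε : ℝ, 0 < ε → ε * c < u0 := by
        intro ε hε
        have hmem : (fun _ : Fin n => -ε) ∈ s := fun i _ => by simpa using neg_lt_zero.mpr hε
        have := hfs _ hmem
        have heq : (fun _ : Fin n => -ε) = ε • (fun _ : Fin n => (-1:ℝ)) := by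
          funext i; simp
        rw [heq, map_smul] at this
        simpa using this
      have := key (u0 / (2 * c)) (div_pos_of_neg_of_neg h (by linarith))
      have h2 : u0 / (2 * c) * c = u0 / 2 := by
        rw [div_mul_eq_mul_div, mul_comm u0 c, mul_comm 2 c, mul_div_mul_left _ _ h1.ne]
      linarith
  -- lam nonneg
  have hlamnn : ∀ i, 0 ≤ lam i := by
    intro i
    by_contra h
    push_neg at h
    set c := f (fun _ : Fin n => (-1:ℝ)) with hc
    set tt := (u0 - c) / (-lam i) + 1 with htt
    have httpos : 0 < tt := by
      rw [htt]
      have : 0 < (u0 - c) / (-lam i) := div_pos (by linarith) (by linarith)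
      linarith
    have hmem : ((fun _ : Fin n => (-1:ℝ)) + tt • (Pi.single i (-1:ℝ) : Fin n → ℝ)) ∈ s := by
      intro j _
      simp only [Set.mem_Iio, Pi.add_apply, Pi.smul_apply, smul_eq_mul, Pi.single_apply]
      rcases eq_or_ne j i with hj | hj
      · rw [hj, if_pos rfl]
        nlinarith
      · rw [if_neg hj, mul_zero]
        norm_num
    have hlt := hfs _ hmem
    rw [map_add, map_smul] at hlt
    have hsing : f (Pi.single i (-1:ℝ) : Fin n → ℝ) = - lam i := by
      have : (Pi.single i (-1:ℝ) : Fin n → ℝ) = (-1:ℝ) • (Pi.single i (1:ℝ) : Fin n → ℝ) := by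
        funext j; simp [Pi.single_apply]
      rw [this, map_smul]; simp [hlamdef]
    rw [hsing] at hlt
    have h2 : tt * (-lam i) = (u0 - c) + (-lam i) := by
      rw [htt, add_mul, one_mul, div_mul_cancel₀ _ (ne_of_gt (by linarith : (0:ℝ) < -lam i))]
    simp only [smul_eq_mul] at hlt
    nlinarith
  -- 0 ≤ f y for y in t
  have hfy : ∀ u : Fin m → ℝ, f b ≤ f (A.mulVec u) := by
    intro u
    have : u0 ≤ f (A.mulVec u - b) := hft _ ⟨u, rfl⟩
    rw [map_sub] at this
    linarith
  -- f (A u) = 0 for all u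
  have hfA : ∀ u : Fin m → ℝ, f (A.mulVec u) = 0 := by
    intro u
    by_contra h
    have hkey : ∀ c : ℝ, f b ≤ c * f (A.mulVec u) := by
      intro c
      have := hfy (c • u)
      rwa [Matrix.mulVec_smul, map_smul, smul_eq_mul] at this
    have := hkey ((f b - 1) / f (A.mulVec u))
    rw [div_mul_cancel₀ _ h] at this
    linarith
  -- f b ≤ 0
  have hfb : f b ≤ 0 := by
    have := hfy 0
    rw [Matrix.mulVec_zero] at this
    simp only [map_zero] at this
    linarith
  -- sum of lam positive
  set S := ∑ i, lam i with hS
  have hSnn : 0 ≤ S := Finset.sum_nonneg (fun i _ => hlamnn i)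
  have hSpos : 0 < S := by
    rcases hSnn.lt_or_eq with h | h
    · exact h
    · exfalso
      have hz : ∀ i, lam i = 0 := by
        intro i
        have := (Finset.sum_eq_zero_iff_of_nonneg (fun i _ => hlamnn i)).mp h.symm
        exact this i (Finset.mem_univ i)
      have hf0 : ∀ x, f x = 0 := by
        intro x; rw [hfx]; simp [hz]
      have h1 : (0:ℝ) < u0 := by
        have := hfs _ hneg1; rwa [hf0] at this
      have h2 : u0 ≤ 0 := by
        have := hft _ ⟨0, rfl⟩
        rwa [hf0] at this
      linarith
  -- apply hlam to normalized lam
  have hfinal := hlam (fun i => lam i / S) (fun i => div_nonneg (hlamnn i) hSnn)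
    (by rw [← Finset.sum_div]; field_simp; exact hS.symm)
    (by
      intro j
      have h1 : ∑ i, lam i * A i j = 0 := by
        have := hfA (Pi.single j 1)
        rw [Matrix.mulVec_single, hfx] at this
        calc ∑ i, lam i * A i j = ∑ i, A i j * 1 * lam i := by
              exact Finset.sum_congr rfl (fun i _ => by ring)
        _ = 0 := this
      calc ∑ i, lam i / S * A i j = (∑ i, lam i * A i j) / S := by
            rw [Finset.sum_div]; exact Finset.sum_congr rfl (fun i _ => by ring)
      _ = 0 := by rw [h1, zero_div])
  have hlb : ∑ i, lam i / S * b i = f b / S := by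
    rw [hfx, Finset.sum_div]
    exact Finset.sum_congr rfl (fun i _ => by ring)
  rw [hlb] at hfinal
  have : f b / S ≤ 0 := div_nonpos_of_nonpos_of_nonneg hfb hSnn
  linarith
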